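/- Let M be a locally finite metric space, and suppose that for every C > 0 there exists a Lipschitz map f : M → L₁ such that every subset U ⊆ M × M with sup_{(x,y)∈U} d_M(x,y) = ∞ satisfies sup_{(x,y)∈U} ‖f(x) − f(y)‖ > C · Lip(f). Then M admits a coarse embedding into L₁. (Contrapositive: if M is not coarsely embeddable into L₁, then there is a constant C such that every Lipschitz f : M → L₁ admits pairs (x,y) with d_M(x,y) arbitrarily large but ‖f(x) − f(y)‖ ≤ C · Lip(f).) -/

import Mathlib

open MeasureTheory

/-- The Lebesgue space `L₁(0,1)` (modeled as `L₁` of the interval `(0,1)` with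
Lebesgue measure). -/
noncomputable abbrev SpaceL1 : Type :=
  MeasureTheory.Lp ℝ 1 (MeasureTheory.volume.restrict (Set.Ioo (0:ℝ) 1))

namespace CoarseAux

open Set Filter
open scoped ENNReal NNReal

noncomputable def aSeq (n : ℕ) : ℝ := 1 - (2:ℝ)⁻¹ ^ n

def ISet (n : ℕ) : Set ℝ := Set.Ioo (aSeq n) (aSeq (n+1))

noncomputable def phiMap (n : ℕ) : ℝ → ℝ := fun t => (2:ℝ) ^ (n+1) * (t - aSeq n)

noncomputable abbrev mu0 : Measure ℝ := volume.restrict (Set.Ioo (0:ℝ) 1)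

lemma aSeq_strictMono : StrictMono aSeq := by
  apply strictMono_nat_of_lt_succ
  intro n
  have : (2:ℝ)⁻¹ ^ (n+1) < (0.5:ℝ) ^ n := by
    norm_num
    exact pow_lt_pow_right_of_lt_one₀ (by norm_num) (by norm_num) (Nat.lt_succ_self n)
  have h2 : ((0.5:ℝ)) ^ n = (2:ℝ)⁻¹ ^ n := by norm_num
  simp only [aSeq]; rw [h2] at this; linarith

lemma aSeq_nonneg (n : ℕ) : 0 ≤ aSeq n := by
  have : (2:ℝ)⁻¹ ^ n ≤ 1 := pow_le_one₀ (by norm_num) (by norm_num)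
  simp only [aSeq]; linarith

lemma aSeq_lt_one (n : ℕ) : aSeq n < 1 := by
  have : (0:ℝ) < (2:ℝ)⁻¹ ^ n := by positivity
  simp only [aSeq]; linarith

lemma aSeq_succ (n : ℕ) : aSeq (n+1) = aSeq n + (2:ℝ)⁻¹ ^ (n+1) := by
  simp only [aSeq, pow_succ]; ring

lemma ISet_subset (n : ℕ) : ISet n ⊆ Set.Ioo (0:ℝ) 1 :=
  Set.Ioo_subset_Ioo (aSeq_nonneg n) (aSeq_lt_one (n+1)).le

lemma measurableSet_ISet (n : ℕ) : MeasurableSet (ISet n) := measurableSet_Ioo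

lemma ISet_disjoint {m n : ℕ} (h : m ≠ n) {t : ℝ} (htm : t ∈ ISet m) : t ∉ ISet n := by
  intro htn
  rcases h.lt_or_gt with hlt | hlt
  · have h1 : aSeq (m+1) ≤ aSeq n := aSeq_strictMono.monotone hlt
    exact absurd (htm.2.trans_le (h1.trans htn.1.le)) (lt_irrefl t)
  · have h1 : aSeq (n+1) ≤ aSeq m := aSeq_strictMono.monotone hlt
    exact absurd (htn.2.trans_le (h1.trans htm.1.le)) (lt_irrefl t)

lemma phiMap_mem_iff (n : ℕ) {t : ℝ} : phiMap n t ∈ Set.Ioo (0:ℝ) 1 ↔ t ∈ ISet n := by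
  have hc : (0:ℝ) < (2:ℝ) ^ (n+1) := by positivity
  have hcc : ((2:ℝ) ^ (n+1)) * ((2:ℝ)⁻¹ ^ (n+1)) = 1 := by
    rw [← mul_pow]; norm_num
  simp only [phiMap, ISet, Set.mem_Ioo, aSeq_succ]
  constructor
  · rintro ⟨h1, h2⟩
    exact ⟨by nlinarith, by nlinarith⟩
  · rintro ⟨h1, h2⟩
    exact ⟨by nlinarith, by nlinarith⟩

lemma measurable_phiMap (n : ℕ) : Measurable (phiMap n) := by
  unfold phiMap; fun_prop

lemma volume_preimage_phiMap (n : ℕ) (A : Set ℝ) :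
    volume (phiMap n ⁻¹' A) = ENNReal.ofReal ((2:ℝ)⁻¹ ^ (n+1)) * volume A := by
  have hd : phiMap n ⁻¹' A
      = (fun t => (-(aSeq n)) + t) ⁻¹' ((fun s => (2:ℝ) ^ (n+1) * s) ⁻¹' A) := by
    ext t
    simp only [phiMap, Set.mem_preimage, sub_eq_neg_add]
  rw [hd, measure_preimage_add, Real.volume_preimage_mul_left (by positivity)]
  congr 1
  rw [abs_of_pos (by positivity), ← inv_pow]

lemma map_phiMap (n : ℕ) :
    Measure.map (phiMap n) (volume.restrict (ISet n))
      = (ENNReal.ofReal ((2:ℝ)⁻¹ ^ (n+1))) • mu0 := by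
  ext A hA
  rw [Measure.map_apply (measurable_phiMap n) hA,
    Measure.restrict_apply (measurable_phiMap n hA), Measure.smul_apply,
    Measure.restrict_apply hA, smul_eq_mul]
  have key : phiMap n ⁻¹' A ∩ ISet n = phiMap n ⁻¹' (A ∩ Set.Ioo 0 1) := by
    ext t
    constructor
    · rintro ⟨hA', hI⟩; exact ⟨hA', (phiMap_mem_iff n).mpr hI⟩
    · rintro ⟨hA', h01⟩; exact ⟨hA', (phiMap_mem_iff n).mp h01⟩
  rw [key, volume_preimage_phiMap]

lemma lintegral_comp_phiMap (n : ℕ) {F : ℝ → ℝ≥0∞} (hF : Measurable F) :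
    ∫⁻ t in ISet n, F (phiMap n t) ∂volume
      = ENNReal.ofReal ((2:ℝ)⁻¹ ^ (n+1)) * ∫⁻ t, F t ∂mu0 := by
  rw [← lintegral_map hF (measurable_phiMap n), map_phiMap, lintegral_smul_measure, smul_eq_mul]

lemma lintegral_term_meas (n : ℕ) {h : ℝ → ℝ} (hm : Measurable h) :
    ∫⁻ t, ‖Set.indicator (ISet n) (fun s => h (phiMap n s)) t‖₊ ∂mu0
      = ENNReal.ofReal ((2:ℝ)⁻¹ ^ (n+1)) * ∫⁻ t, ‖h t‖₊ ∂mu0 := by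
  have hpt : ∀ t, (‖Set.indicator (ISet n) (fun s => h (phiMap n s)) t‖₊ : ℝ≥0∞)
      = Set.indicator (ISet n) (fun s => (‖h (phiMap n s)‖₊ : ℝ≥0∞)) t := by
    intro t; by_cases ht : t ∈ ISet n <;> simp [ht]
  simp_rw [hpt]
  rw [lintegral_indicator (measurableSet_ISet n),
    Measure.restrict_restrict (measurableSet_ISet n),
    Set.inter_eq_left.mpr (ISet_subset n)]
  exact lintegral_comp_phiMap n (hm.nnnorm.coe_nnreal_ennreal)

lemma ae_indicator_comp (n : ℕ) {h₁ h₂ : ℝ → ℝ} (hh : h₁ =ᵐ[mu0] h₂) :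
    Set.indicator (ISet n) (fun s => h₁ (phiMap n s))
      =ᵐ[mu0] Set.indicator (ISet n) (fun s => h₂ (phiMap n s)) := by
  have hh' : mu0 {x | ¬ h₁ x = h₂ x} = 0 := by
    rw [Filter.EventuallyEq, ae_iff] at hh; exact hh
  obtain ⟨A, hsub, hAm, hA0⟩ := exists_measurable_superset_of_null hh'
  have hA0' : volume (A ∩ Set.Ioo (0:ℝ) 1) = 0 := by
    rwa [Measure.restrict_apply hAm] at hA0
  have hpre : volume (phiMap n ⁻¹' (A ∩ Set.Ioo 0 1)) = 0 := by
    rw [volume_preimage_phiMap, hA0', mul_zero]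
  have hpre' : mu0 (phiMap n ⁻¹' (A ∩ Set.Ioo 0 1)) = 0 :=
    le_antisymm (le_trans (Measure.restrict_le_self _) hpre.le) zero_le
  rw [Filter.EventuallyEq, ae_iff]
  refine measure_mono_null ?_ hpre'
  intro t ht
  simp only [Set.mem_setOf_eq] at ht
  by_cases htI : t ∈ ISet n
  · have hne : ¬ h₁ (phiMap n t) = h₂ (phiMap n t) := by
      simpa [Set.indicator_of_mem htI] using ht
    exact ⟨hsub hne, (phiMap_mem_iff n).mpr htI⟩
  · exact absurd (by simp [Set.indicator_of_notMem htI]) ht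

lemma aesm_term (n : ℕ) {h : ℝ → ℝ} (hm : AEStronglyMeasurable h mu0) :
    AEStronglyMeasurable (Set.indicator (ISet n) (fun s => h (phiMap n s))) mu0 := by
  refine ⟨Set.indicator (ISet n) (fun s => hm.mk h (phiMap n s)), ?_, ?_⟩
  · exact ((hm.stronglyMeasurable_mk.measurable.comp (measurable_phiMap n)).indicator
      (measurableSet_ISet n)).stronglyMeasurable
  · exact ae_indicator_comp n hm.ae_eq_mk

lemma lintegral_term (n : ℕ) {h : ℝ → ℝ} (hm : AEStronglyMeasurable h mu0) :
    ∫⁻ t, ‖Set.indicator (ISet n) (fun s => h (phiMap n s)) t‖₊ ∂mu0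
      = ENNReal.ofReal ((2:ℝ)⁻¹ ^ (n+1)) * ∫⁻ t, ‖h t‖₊ ∂mu0 := by
  have e1 : ∫⁻ t, ‖Set.indicator (ISet n) (fun s => h (phiMap n s)) t‖₊ ∂mu0
      = ∫⁻ t, ‖Set.indicator (ISet n) (fun s => hm.mk h (phiMap n s)) t‖₊ ∂mu0 :=
    lintegral_congr_ae ((ae_indicator_comp n hm.ae_eq_mk).fun_comp
      (fun r => (‖r‖₊ : ℝ≥0∞)))
  have e2 : ∫⁻ t, ‖h t‖₊ ∂mu0 = ∫⁻ t, ‖hm.mk h t‖₊ ∂mu0 :=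
    lintegral_congr_ae (hm.ae_eq_mk.fun_comp (fun r => (‖r‖₊ : ℝ≥0∞)))
  rw [e1, e2]
  exact lintegral_term_meas n hm.stronglyMeasurable_mk.measurable

/-- abbreviation for the n-th term -/
noncomputable def termF (g : ℕ → ℝ → ℝ) (n : ℕ) (t : ℝ) : ℝ :=
  Set.indicator (ISet n) (fun s => g n (phiMap n s)) t

lemma aesm_termF (g : ℕ → ℝ → ℝ) (n : ℕ) (hm : AEStronglyMeasurable (g n) mu0) :
    AEStronglyMeasurable (fun t => termF g n t) mu0 := by
  unfold termF
  exact aesm_term n hm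

lemma lintegral_termF (g : ℕ → ℝ → ℝ) (n : ℕ) (hm : AEStronglyMeasurable (g n) mu0) :
    ∫⁻ t, ‖termF g n t‖₊ ∂mu0
      = ENNReal.ofReal ((2:ℝ)⁻¹ ^ (n+1)) * ∫⁻ t, ‖g n t‖₊ ∂mu0 := by
  unfold termF
  exact lintegral_term n hm

lemma termF_zero {g : ℕ → ℝ → ℝ} {m n : ℕ} {t : ℝ} (ht : t ∈ ISet m) (hn : n ≠ m) :
    termF g n t = 0 :=
  Set.indicator_of_notMem (fun h' => (ISet_disjoint hn h') ht) _

lemma summable_termF (g : ℕ → ℝ → ℝ) (t : ℝ) : Summable (fun n => termF g n t) := by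
  by_cases hex : ∃ m, t ∈ ISet m
  · obtain ⟨m, hm⟩ := hex
    exact summable_of_ne_finset_zero (s := {m}) (fun n hn => termF_zero hm (by simpa using hn))
  · push_neg at hex
    refine summable_of_ne_finset_zero (s := ∅) (fun n _ => ?_)
    exact Set.indicator_of_notMem (hex n) _

lemma tsum_termF_nnnorm (g : ℕ → ℝ → ℝ) (t : ℝ) :
    (‖∑' n, termF g n t‖₊ : ℝ≥0∞) = ∑' n, (‖termF g n t‖₊ : ℝ≥0∞) := by
  by_cases hex : ∃ m, t ∈ ISet m
  · obtain ⟨m, hm⟩ := hex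
    rw [tsum_eq_single m (fun n hn => termF_zero hm hn),
      tsum_eq_single m (fun n hn => by rw [termF_zero hm hn]; simp)]
  · push_neg at hex
    have hz : ∀ n, termF g n t = 0 := fun n => Set.indicator_of_notMem (hex n) _
    rw [tsum_eq_single 0 (fun n _ => hz n), hz,
      tsum_eq_single 0 (fun n _ => by rw [hz n]; simp), hz]

lemma tsum_termF_sub (g₁ g₂ : ℕ → ℝ → ℝ) (t : ℝ) :
    (∑' n, termF g₁ n t) - (∑' n, termF g₂ n t)
      = ∑' n, termF (fun n s => g₁ n s - g₂ n s) n t := by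
  by_cases hex : ∃ m, t ∈ ISet m
  · obtain ⟨m, hm⟩ := hex
    rw [tsum_eq_single m (fun n hn => termF_zero hm hn),
      tsum_eq_single m (fun n hn => termF_zero hm hn),
      tsum_eq_single m (fun n hn => termF_zero hm hn)]
    simp [termF, Set.indicator_of_mem hm]
  · push_neg at hex
    have hz : ∀ (g : ℕ → ℝ → ℝ) n, termF g n t = 0 :=
      fun g n => Set.indicator_of_notMem (hex n) _
    simp only [tsum_eq_single 0 (fun n _ => hz _ n), hz]
    simp

lemma aesm_G {g : ℕ → ℝ → ℝ} (hg : ∀ n, AEStronglyMeasurable (g n) mu0) :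
    AEStronglyMeasurable (fun t => ∑' n, termF g n t) mu0 := by
  refine aestronglyMeasurable_of_tendsto_ae atTop
    (f := fun k => fun t => ∑ n ∈ Finset.range k, termF g n t)
    (fun k => Finset.aestronglyMeasurable_fun_sum _ (fun n _ => aesm_termF g n (hg n))) ?_
  refine Filter.Eventually.of_forall (fun t => ?_)
  exact (summable_termF g t).hasSum.tendsto_sum_nat

lemma geom_sum : ∑' n : ℕ, ENNReal.ofReal ((2:ℝ)⁻¹ ^ (n+1)) = 1 := by
  have h : ∀ n : ℕ, ENNReal.ofReal ((2:ℝ)⁻¹ ^ (n+1)) = (2:ℝ≥0∞)⁻¹ ^ (n+1) := by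
    intro n
    rw [ENNReal.ofReal_pow (by norm_num)]
    congr 1
    rw [ENNReal.ofReal_inv_of_pos (by norm_num)]
    norm_num
  simp_rw [h]
  rw [ENNReal.tsum_geometric_add_one, ENNReal.one_sub_inv_two, inv_inv,
    ENNReal.inv_mul_cancel (by norm_num) (by norm_num)]




noncomputable abbrev SpaceL1' : Type :=
  MeasureTheory.Lp ℝ 1 (MeasureTheory.volume.restrict (Set.Ioo (0:ℝ) 1))

set_option maxHeartbeats 1000000 in
lemma embed_of_good_family {M : Type*} [MetricSpace M] (x₀ : M)
    (v : ℕ → M → SpaceL1') (R : ℕ → ℝ)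
    (hv_lip : ∀ (n : ℕ) (x y : M), ‖v n x - v n y‖ ≤ dist x y)
    (hv0 : ∀ (n : ℕ) (x : M), ‖v n x‖ ≤ dist x x₀)
    (hv_low : ∀ (n : ℕ) (x y : M), R n ≤ dist x y → (4:ℝ)^(n+1) ≤ ‖v n x - v n y‖) :
    ∃ g : M → SpaceL1', (∀ x y : M, ‖g x - g y‖ ≤ dist x y) ∧
      (∀ (m : ℕ) (x y : M), R m ≤ dist x y → (2:ℝ)^(m+1) ≤ ‖g x - g y‖) := by
  classical
  set Gf : M → ℝ → ℝ := fun x t => ∑' n, termF (fun n => ⇑(v n x)) n t with hGf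
  have aesm_v : ∀ (n : ℕ) (x : M), AEStronglyMeasurable (⇑(v n x)) mu0 :=
    fun n x => Lp.aestronglyMeasurable _
  have hnormterm : ∀ (n : ℕ) (x y : M),
      ∫⁻ t, ‖(⇑(v n x)) t - (⇑(v n y)) t‖₊ ∂mu0 = ENNReal.ofReal ‖v n x - v n y‖ := by
    intro n x y
    have e1 : ∫⁻ t, ‖(⇑(v n x)) t - (⇑(v n y)) t‖₊ ∂mu0
        = eLpNorm (⇑(v n x) - ⇑(v n y)) 1 mu0 := by
      rw [eLpNorm_one_eq_lintegral_enorm]; rfl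
    rw [e1, ← eLpNorm_congr_ae (Lp.coeFn_sub (v n x) (v n y)), Lp.norm_def,
      ENNReal.ofReal_toReal (Lp.eLpNorm_ne_top _)]
  have key : ∀ x y : M, ∫⁻ t, ‖Gf x t - Gf y t‖₊ ∂mu0
      = ∑' n, ENNReal.ofReal ((2:ℝ)⁻¹^(n+1)) * ENNReal.ofReal ‖v n x - v n y‖ := by
    intro x y
    have hd : ∀ n : ℕ, AEStronglyMeasurable
        (fun s => (⇑(v n x)) s - (⇑(v n y)) s) mu0 :=
      fun n => (aesm_v n x).sub (aesm_v n y)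
    calc ∫⁻ t, ‖Gf x t - Gf y t‖₊ ∂mu0
        = ∫⁻ t, ∑' n, (‖termF (fun n s => (⇑(v n x)) s - (⇑(v n y)) s) n t‖₊ : ENNReal) ∂mu0 := by
          refine lintegral_congr (fun t => ?_)
          rw [hGf]
          simp only
          rw [tsum_termF_sub, tsum_termF_nnnorm]
      _ = ∑' n, ∫⁻ t, ‖termF (fun n s => (⇑(v n x)) s - (⇑(v n y)) s) n t‖₊ ∂mu0 :=
          lintegral_tsum (fun n => (aesm_termF (fun n s => (⇑(v n x)) s - (⇑(v n y)) s) n (hd n)).enorm)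
      _ = ∑' n, ENNReal.ofReal ((2:ℝ)⁻¹^(n+1))
            * ∫⁻ t, ‖(⇑(v n x)) t - (⇑(v n y)) t‖₊ ∂mu0 :=
          tsum_congr (fun n => lintegral_termF (fun n s => (⇑(v n x)) s - (⇑(v n y)) s) n (hd n))
      _ = ∑' n, ENNReal.ofReal ((2:ℝ)⁻¹^(n+1)) * ENNReal.ofReal ‖v n x - v n y‖ :=
          tsum_congr (fun n => by rw [hnormterm n x y])
  have key0 : ∀ x : M, ∫⁻ t, ‖Gf x t‖₊ ∂mu0
      = ∑' n, ENNReal.ofReal ((2:ℝ)⁻¹^(n+1)) * ENNReal.ofReal ‖v n x‖ := by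
    intro x
    calc ∫⁻ t, ‖Gf x t‖₊ ∂mu0
        = ∫⁻ t, ∑' n, (‖termF (fun n => ⇑(v n x)) n t‖₊ : ENNReal) ∂mu0 := by
          refine lintegral_congr (fun t => ?_)
          rw [hGf]
          simp only
          rw [tsum_termF_nnnorm]
      _ = ∑' n, ∫⁻ t, ‖termF (fun n => ⇑(v n x)) n t‖₊ ∂mu0 :=
          lintegral_tsum (fun n => (aesm_termF (fun n => ⇑(v n x)) n (aesm_v n x)).enorm)
      _ = ∑' n, ENNReal.ofReal ((2:ℝ)⁻¹^(n+1)) * ∫⁻ t, ‖(⇑(v n x)) t‖₊ ∂mu0 :=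
          tsum_congr (fun n => lintegral_termF (fun n => ⇑(v n x)) n (aesm_v n x))
      _ = ∑' n, ENNReal.ofReal ((2:ℝ)⁻¹^(n+1)) * ENNReal.ofReal ‖v n x‖ := by
          refine tsum_congr (fun n => ?_)
          simp only [← enorm_eq_nnnorm]
          rw [← eLpNorm_one_eq_lintegral_enorm, Lp.norm_def,
            ENNReal.ofReal_toReal (Lp.eLpNorm_ne_top _)]
  have memG : ∀ x : M, MemLp (Gf x) 1 mu0 := by
    intro x
    refine ⟨aesm_G (fun n => aesm_v n x), ?_⟩
    rw [eLpNorm_one_eq_lintegral_enorm]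
    simp only [enorm_eq_nnnorm]
    rw [key0 x]
    calc ∑' n, ENNReal.ofReal ((2:ℝ)⁻¹^(n+1)) * ENNReal.ofReal ‖v n x‖
        ≤ ∑' n, ENNReal.ofReal ((2:ℝ)⁻¹^(n+1)) * ENNReal.ofReal (dist x x₀) :=
          ENNReal.tsum_le_tsum (fun n =>
            mul_le_mul_right (ENNReal.ofReal_le_ofReal (hv0 n x)) _)
      _ = (∑' n : ℕ, ENNReal.ofReal ((2:ℝ)⁻¹^(n+1))) * ENNReal.ofReal (dist x x₀) :=
          ENNReal.tsum_mul_right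
      _ = ENNReal.ofReal (dist x x₀) := by rw [geom_sum, one_mul]
      _ < ⊤ := ENNReal.ofReal_lt_top
  have normEq : ∀ x y : M, ‖(memG x).toLp (Gf x) - (memG y).toLp (Gf y)‖
      = (∑' n, ENNReal.ofReal ((2:ℝ)⁻¹^(n+1)) * ENNReal.ofReal ‖v n x - v n y‖).toReal := by
    intro x y
    rw [← MemLp.toLp_sub (memG x) (memG y), Lp.norm_toLp,
      eLpNorm_one_eq_lintegral_enorm]
    congr 1
    rw [← key x y]
    exact lintegral_congr (fun t => by simp [Pi.sub_apply, enorm_eq_nnnorm])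
  have hSle : ∀ x y : M,
      (∑' n, ENNReal.ofReal ((2:ℝ)⁻¹^(n+1)) * ENNReal.ofReal ‖v n x - v n y‖)
        ≤ ENNReal.ofReal (dist x y) := by
    intro x y
    calc ∑' n, ENNReal.ofReal ((2:ℝ)⁻¹^(n+1)) * ENNReal.ofReal ‖v n x - v n y‖
        ≤ ∑' n, ENNReal.ofReal ((2:ℝ)⁻¹^(n+1)) * ENNReal.ofReal (dist x y) :=
          ENNReal.tsum_le_tsum (fun n =>
            mul_le_mul_right (ENNReal.ofReal_le_ofReal (hv_lip n x y)) _)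
      _ = (∑' n : ℕ, ENNReal.ofReal ((2:ℝ)⁻¹^(n+1))) * ENNReal.ofReal (dist x y) :=
          ENNReal.tsum_mul_right
      _ = ENNReal.ofReal (dist x y) := by rw [geom_sum, one_mul]
  refine ⟨fun x => (memG x).toLp (Gf x), fun x y => ?_, fun m x y hRm => ?_⟩
  · rw [normEq x y]
    exact ENNReal.toReal_le_of_le_ofReal dist_nonneg (hSle x y)
  · have hterm : ENNReal.ofReal ((2:ℝ)^(m+1))
        ≤ ∑' n, ENNReal.ofReal ((2:ℝ)⁻¹^(n+1)) * ENNReal.ofReal ‖v n x - v n y‖ := by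
      calc ENNReal.ofReal ((2:ℝ)^(m+1))
          = ENNReal.ofReal ((2:ℝ)⁻¹^(m+1) * (4:ℝ)^(m+1)) := by
            congr 1
            rw [← mul_pow]
            norm_num
        _ = ENNReal.ofReal ((2:ℝ)⁻¹^(m+1)) * ENNReal.ofReal ((4:ℝ)^(m+1)) :=
            ENNReal.ofReal_mul (by positivity)
        _ ≤ ENNReal.ofReal ((2:ℝ)⁻¹^(m+1)) * ENNReal.ofReal ‖v m x - v m y‖ :=
            mul_le_mul_right (ENNReal.ofReal_le_ofReal (hv_low m x y hRm)) _
        _ ≤ _ := ENNReal.le_tsum m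
    have hfin : (∑' n, ENNReal.ofReal ((2:ℝ)⁻¹^(n+1)) * ENNReal.ofReal ‖v n x - v n y‖) ≠ ⊤ :=
      (lt_of_le_of_lt (hSle x y) ENNReal.ofReal_lt_top).ne
    rw [normEq x y]
    calc (2:ℝ)^(m+1) = (ENNReal.ofReal ((2:ℝ)^(m+1))).toReal := by
          rw [ENNReal.toReal_ofReal (by positivity)]
      _ ≤ _ := ENNReal.toReal_mono hfin hterm




end CoarseAux

open CoarseAux

/-- If a locally finite metric space `M` is such that for every `C > 0` there is a
Lipschitz map `f : M → L₁` with the property that every subset `U ⊆ M × M` on which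
the distances are unbounded contains pairs with `‖f x − f y‖ > C · Lip(f)`, then `M`
admits a coarse embedding into `L₁`. -/
theorem coarseEmbedding_into_L1_of_no_compression {M : Type*} [MetricSpace M]
    (hlf : ∀ (x : M) (r : ℝ), (Metric.closedBall x r).Finite)
    (h : ∀ C : ℝ, 0 < C → ∃ (f : M → SpaceL1) (L : NNReal), LipschitzWith L f ∧
      ∀ U : Set (M × M), (∀ R : ℝ, ∃ p ∈ U, R ≤ dist p.1 p.2) →
        ∃ p ∈ U, C * L < ‖f p.1 - f p.2‖) :
    ∃ g : M → SpaceL1, ∃ ρ₁ ρ₂ : ℝ → ℝ,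
      (∀ x y : M, ρ₁ (dist x y) ≤ ‖g x - g y‖ ∧ ‖g x - g y‖ ≤ ρ₂ (dist x y)) ∧
      Filter.Tendsto ρ₁ Filter.atTop Filter.atTop := by
  classical
  by_cases hbdd : ∃ D : ℝ, ∀ x y : M, dist x y ≤ D
  · obtain ⟨D, hD⟩ := hbdd
    refine ⟨fun _ => 0, fun t => t - D, fun _ => 0, fun x y => ⟨?_, ?_⟩, ?_⟩
    · simp only [sub_self, norm_zero]
      linarith [hD x y]
    · simp
    · simpa [sub_eq_add_neg] using
        Filter.tendsto_atTop_add_const_right Filter.atTop (-D) Filter.tendsto_id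
  · push_neg at hbdd
    obtain ⟨x₀, -, -⟩ := hbdd 0
    have H : ∀ n : ℕ, ∃ (fn : M → SpaceL1) (Ln : NNReal), LipschitzWith Ln fn ∧
        ∀ U : Set (M × M), (∀ R : ℝ, ∃ p ∈ U, R ≤ dist p.1 p.2) →
          ∃ p ∈ U, (4:ℝ)^(n+1) * Ln < ‖fn p.1 - fn p.2‖ :=
      fun n => h ((4:ℝ)^(n+1)) (by positivity)
    choose f L hlip hprop using H
    have hub : ∀ Rr : ℝ, ∃ p : M × M, Rr ≤ dist p.1 p.2 := by
      intro Rr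
      obtain ⟨x, y, hxy⟩ := hbdd Rr
      exact ⟨(x, y), hxy.le⟩
    have hL : ∀ n, 0 < (L n : ℝ) := by
      intro n
      rcases eq_or_lt_of_le ((L n).coe_nonneg) with h0 | h0
      · exfalso
        obtain ⟨p, -, hlt⟩ := hprop n Set.univ
          (fun Rr => by obtain ⟨p, hp⟩ := hub Rr; exact ⟨p, trivial, hp⟩)
        have heq : f n p.1 = f n p.2 := by
          have hd := (hlip n).dist_le_mul p.1 p.2
          rw [← h0] at hd
          simp only [zero_mul] at hd
          exact dist_le_zero.mp hd
        rw [heq, sub_self, norm_zero, ← h0, mul_zero] at hlt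
        exact lt_irrefl 0 hlt
      · exact h0
    have hRex : ∀ n, ∃ Rn : ℝ, ∀ x y : M,
        Rn ≤ dist x y → (4:ℝ)^(n+1) * (L n) < ‖f n x - f n y‖ := by
      intro n
      by_contra hcon
      push_neg at hcon
      obtain ⟨p, hpU, hlt⟩ := hprop n
        {p : M × M | ‖f n p.1 - f n p.2‖ ≤ (4:ℝ)^(n+1) * (L n)}
        (fun Rr => by
          obtain ⟨x, y, hxy, hle⟩ := hcon Rr
          exact ⟨(x, y), hle, hxy⟩)
      exact absurd hlt (not_lt.mpr hpU)
    choose R hR using hRex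
    set v : ℕ → M → SpaceL1 := fun n x => ((L n : ℝ))⁻¹ • (f n x - f n x₀) with hv
    have hv_sub : ∀ (n : ℕ) (x y : M),
        v n x - v n y = ((L n : ℝ))⁻¹ • (f n x - f n y) := by
      intro n x y
      rw [hv]
      simp only
      rw [← smul_sub, sub_sub_sub_cancel_right]
    have hv_lip : ∀ (n : ℕ) (x y : M), ‖v n x - v n y‖ ≤ dist x y := by
      intro n x y
      rw [hv_sub, norm_smul, norm_inv, Real.norm_eq_abs, abs_of_pos (hL n)]
      have h1 : ‖f n x - f n y‖ ≤ (L n : ℝ) * dist x y := by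
        rw [← dist_eq_norm]; exact (hlip n).dist_le_mul x y
      calc ((L n:ℝ))⁻¹ * ‖f n x - f n y‖ ≤ ((L n:ℝ))⁻¹ * ((L n : ℝ) * dist x y) := by
            exact mul_le_mul_of_nonneg_left h1 (by positivity)
        _ = dist x y := by
            rw [← mul_assoc, inv_mul_cancel₀ (hL n).ne', one_mul]
    have hv_low : ∀ (n : ℕ) (x y : M), R n ≤ dist x y →
        (4:ℝ)^(n+1) ≤ ‖v n x - v n y‖ := by
      intro n x y hd
      rw [hv_sub, norm_smul, norm_inv, Real.norm_eq_abs, abs_of_pos (hL n)]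
      have h1 := hR n x y hd
      rw [show (4:ℝ)^(n+1) = ((L n:ℝ))⁻¹ * ((4:ℝ)^(n+1) * (L n)) by
        rw [mul_comm ((4:ℝ)^(n+1)) ((L n:ℝ)), ← mul_assoc,
          inv_mul_cancel₀ (hL n).ne', one_mul]]
      exact mul_le_mul_of_nonneg_left h1.le (by positivity)
    have hv0 : ∀ (n : ℕ) (x : M), ‖v n x‖ ≤ dist x x₀ := by
      intro n x
      have h1 := hv_lip n x x₀
      have h2 : v n x₀ = 0 := by rw [hv]; simp
      rwa [h2, sub_zero] at h1
    obtain ⟨g, hupper, hlower⟩ := embed_of_good_family x₀ v R hv_lip hv0 hv_low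
    -- construction of ρ₁
    set R' : ℕ → ℝ := fun n => n + ∑ k ∈ Finset.range (n+1), max (R k) 0 with hR'def
    have hR'mono : Monotone R' := by
      apply monotone_nat_of_le_succ
      intro n
      rw [hR'def]
      simp only
      have h1 : ∑ k ∈ Finset.range (n+1), max (R k) 0
          ≤ ∑ k ∈ Finset.range (n+2), max (R k) 0 := by
        apply Finset.sum_le_sum_of_subset_of_nonneg
        · exact Finset.range_subset_range.mpr (by omega)
        · intro i _ _; exact le_max_right _ _
      push_cast
      linarith
    have hR'geR : ∀ n, R n ≤ R' n := by
      intro n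
      rw [hR'def]
      simp only
      have h1 : max (R n) 0 ≤ ∑ k ∈ Finset.range (n+1), max (R k) 0 :=
        Finset.single_le_sum (f := fun k => max (R k) 0)
          (fun i _ => le_max_right _ _) (Finset.self_mem_range_succ n)
      have h2 : R n ≤ max (R n) 0 := le_max_left _ _
      linarith [Nat.cast_nonneg (α := ℝ) n]
    have hR'gen : ∀ n : ℕ, (n:ℝ) ≤ R' n := by
      intro n
      rw [hR'def]
      simp only
      have h1 : (0:ℝ) ≤ ∑ k ∈ Finset.range (n+1), max (R k) 0 :=
        Finset.sum_nonneg (fun i _ => le_max_right _ _)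
      linarith
    have hfind : ∀ t : ℝ, ∃ n : ℕ, t < R' n := by
      intro t
      refine ⟨⌈t⌉₊ + 1, lt_of_lt_of_le ?_ (hR'gen (⌈t⌉₊ + 1))⟩
      have := Nat.le_ceil t
      push_cast
      linarith
    set NN : ℝ → ℕ := fun t => Nat.find (hfind t) with hNNdef
    refine ⟨g, fun t => 2 ^ (NN t) - 1, id, fun x y => ⟨?_, hupper x y⟩, ?_⟩
    · show (2:ℝ) ^ (NN (dist x y)) - 1 ≤ ‖g x - g y‖
      cases hmN : NN (dist x y) with
      | zero =>
        simpa using norm_nonneg (g x - g y)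
      | succ k =>
        have hklt : k < NN (dist x y) := hmN ▸ Nat.lt_succ_self k
        have hk : ¬ dist x y < R' k := Nat.find_min (hfind _) hklt
        have hRk : R k ≤ dist x y := le_trans (hR'geR k) (not_lt.mp hk)
        have hlow := hlower k x y hRk
        linarith
    · rw [Filter.tendsto_atTop_atTop]
      intro b
      refine ⟨R' ⌈b⌉₊, fun t ht => ?_⟩
      have h1 : ⌈b⌉₊ < NN t := by
        rw [hNNdef]
        simp only
        rw [Nat.lt_find_iff]
        intro m hm
        exact not_lt.mpr (le_trans (hR'mono hm) ht)
      have h2 : (NN t : ℝ) < 2 ^ (NN t) := by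
        calc (NN t : ℝ) < ((2^(NN t) : ℕ) : ℝ) := by exact_mod_cast Nat.lt_two_pow_self
          _ = 2 ^ NN t := by push_cast; ring
      have h3 : b ≤ (⌈b⌉₊ : ℝ) := Nat.le_ceil b
      have h4 : ((⌈b⌉₊ : ℕ) : ℝ) + 1 ≤ (NN t : ℝ) := by exact_mod_cast h1
      linarith
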